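/- Let S be the gluing of affine semigroups S_1 and S_2 with G(S_1) ∩ G(S_2) = dℤ. Then d has a unique presentation as an element of S (i.e., exactly two factorizations, with disjoint supports) if and only if d - a ∉ S for every a ∈ Betti(S_1) ∪ Betti(S_2). -/

import Mathlib

open Finset

variable {M : Type*} [AddCommMonoid M] {r : ℕ}

/-- The factorization homomorphism associated to the generating tuple `A`. -/
def phi (A : Fin r → M) (u : Fin r → ℕ) : M := ∑ i, u i • A i

/-- One step of the relation `R`: two factorizations of `a` with nonzero dot product. -/
def step (A : Fin r → M) (a : M) (u v : Fin r → ℕ) : Prop :=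
  phi A u = a ∧ phi A v = a ∧ (∑ i, u i * v i) ≠ 0

/-- The relation `R` on the fiber of `a`: connected by a chain of factorizations with
consecutive nonzero dot products. -/
def Rrel (A : Fin r → M) (a : M) : (Fin r → ℕ) → (Fin r → ℕ) → Prop :=
  Relation.ReflTransGen (step A a)

/-- `a` is a Betti element: its fiber has more than one `R`-class. -/
def IsBetti (A : Fin r → M) (a : M) : Prop :=
  ∃ u v : Fin r → ℕ, phi A u = a ∧ phi A v = a ∧ ¬ Rrel A a u v

/-- `a` is Betti-minimal: a Betti element minimal with respect to `b ≺ a ↔ a - b ∈ S`. -/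
def BettiMinimal (A : Fin r → M) (a : M) : Prop :=
  IsBetti A a ∧ ∀ b : M, IsBetti A b → (∃ c : M, a = b + c) → b = a

/-- `a` has a unique presentation: exactly two factorizations, with disjoint support. -/
def HasUniquePres (A : Fin r → M) (a : M) : Prop :=
  ∃ u v : Fin r → ℕ, u ≠ v ∧ {w : Fin r → ℕ | phi A w = a} = {u, v} ∧
    (∑ i, u i * v i) = 0

/-- The monoid generated by `A` is uniquely presented: every Betti element has exactly two
factorizations, with disjoint support. -/
def UniquelyPresented (A : Fin r → M) : Prop :=
  ∀ a : M, IsBetti A a → HasUniquePres A a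

/-! ### Auxiliary lemmas -/

lemma phi_zero' (A : Fin r → M) : phi A 0 = 0 := by simp [phi]

lemma phi_add' (A : Fin r → M) (u v : Fin r → ℕ) : phi A (u + v) = phi A u + phi A v := by
  simp [phi, Pi.add_apply, add_nsmul, Finset.sum_add_distrib]

lemma phi_single' (A : Fin r → M) (i : Fin r) : phi A (Pi.single i 1) = A i := by
  classical
  simp [phi, Pi.single_apply, ite_smul]

lemma mem_closure_iff_phi (A : Fin r → M) (x : M) :
    x ∈ AddSubmonoid.closure (Set.range A) ↔ ∃ u, phi A u = x := by
  constructor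
  · intro hx
    induction hx using AddSubmonoid.closure_induction with
    | mem y hy => obtain ⟨i, rfl⟩ := hy; exact ⟨Pi.single i 1, phi_single' A i⟩
    | zero => exact ⟨0, phi_zero' A⟩
    | add x y _ _ hx hy =>
      obtain ⟨u, rfl⟩ := hx; obtain ⟨w, rfl⟩ := hy; exact ⟨u + w, phi_add' A u w⟩
  · rintro ⟨u, rfl⟩
    exact AddSubmonoid.sum_mem _ fun i _ =>
      AddSubmonoid.nsmul_mem _ (AddSubmonoid.subset_closure (Set.mem_range_self i)) (u i)

lemma phi_append' {r₁ r₂ : ℕ} (A₁ : Fin r₁ → M) (A₂ : Fin r₂ → M) (u : Fin r₁ → ℕ)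
    (v : Fin r₂ → ℕ) :
    phi (Fin.append A₁ A₂) (Fin.append u v) = phi A₁ u + phi A₂ v := by
  simp [phi, Fin.sum_univ_add, Fin.append_left, Fin.append_right]

lemma append_decomp {r₁ r₂ : ℕ} (w : Fin (r₁ + r₂) → ℕ) :
    w = Fin.append (fun i => w (Fin.castAdd r₂ i)) (fun i => w (Fin.natAdd r₁ i)) := by
  funext i
  refine Fin.addCases (fun i => ?_) (fun i => ?_) i <;> simp [Fin.append_left, Fin.append_right]

lemma exists_step' {A : Fin r → M} {a : M} {u v : Fin r → ℕ}
    (h : Rrel A a u v) (hne : u ≠ v) : ∃ w, w ≠ u ∧ step A a u w := by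
  unfold Rrel at h
  revert hne
  induction h using Relation.ReflTransGen.head_induction_on with
  | refl => intro hne; exact absurd rfl hne
  | head h' hchain ih =>
    rename_i b c
    intro hne
    by_cases hcb : c = b
    · subst hcb
      exact ih hne
    · exact ⟨c, hcb, h'⟩

lemma descent' {r : ℕ} {G : Type*} [AddCommGroup G] (A : Fin r → G) :
    ∀ N (u v : Fin r → ℕ), (∑ i, u i) ≤ N → u ≠ v → phi A u = phi A v →
    ∃ a c, IsBetti A a ∧ phi A u = a + c ∧ c ∈ AddSubmonoid.closure (Set.range A) := by
  intro N
  induction N with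
  | zero =>
    intro u v hsum hne hphi
    by_cases hR : Rrel A (phi A u) u v
    · obtain ⟨w, hwu, hw⟩ := exists_step' hR hne
      obtain ⟨_, _, hdot⟩ := hw
      obtain ⟨i, hi⟩ : ∃ i, u i * w i ≠ 0 := by
        by_contra hc
        push_neg at hc
        exact hdot (Finset.sum_eq_zero fun i _ => hc i)
      have hui : u i ≠ 0 := fun h => hi (by simp [h])
      have : u i ≤ ∑ j, u j := Finset.single_le_sum (fun j _ => Nat.zero_le _) (Finset.mem_univ i)
      omega
    · exact ⟨phi A u, 0, ⟨u, v, rfl, hphi.symm, hR⟩, by simp, zero_mem _⟩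
  | succ N ih =>
    intro u v hsum hne hphi
    by_cases hR : Rrel A (phi A u) u v
    · obtain ⟨w, hwu, hw⟩ := exists_step' hR hne
      obtain ⟨-, hwphi, hdot⟩ := hw
      obtain ⟨i, hi⟩ : ∃ i, u i * w i ≠ 0 := by
        by_contra hc
        push_neg at hc
        exact hdot (Finset.sum_eq_zero fun i _ => hc i)
      have hui : 1 ≤ u i := Nat.one_le_iff_ne_zero.mpr (fun h => hi (by simp [h]))
      have hwi : 1 ≤ w i := Nat.one_le_iff_ne_zero.mpr (fun h => hi (by simp [h]))
      set u' : Fin r → ℕ := u - Pi.single i 1 with hu'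
      set w' : Fin r → ℕ := w - Pi.single i 1 with hw'
      have hurec : u = u' + Pi.single i 1 := by
        funext j
        by_cases hj : j = i <;> simp [hu', Pi.single_apply, hj] <;> omega
      have hwrec : w = w' + Pi.single i 1 := by
        funext j
        by_cases hj : j = i <;> simp [hw', Pi.single_apply, hj] <;> omega
      have hphiu : phi A u = phi A u' + A i := by
        conv_lhs => rw [hurec]
        rw [phi_add', phi_single']
      have hphiw : phi A w = phi A w' + A i := by
        conv_lhs => rw [hwrec]
        rw [phi_add', phi_single']
      have hphi' : phi A u' = phi A w' := by
        have h2 : phi A u' + A i = phi A w' + A i := by rw [← hphiu, ← hphiw, hwphi]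
        exact add_right_cancel h2
      have hne' : u' ≠ w' := by
        intro h
        apply hwu
        rw [hwrec, hurec, h]
      have hsum' : (∑ j, u' j) ≤ N := by
        have h3 : (∑ j, u j) = (∑ j, u' j) + 1 := by
          conv_lhs => rw [hurec]
          simp [Finset.sum_add_distrib, Pi.single_apply]
        omega
      obtain ⟨a, c, hb, heq, hc⟩ := ih u' w' hsum' hne' hphi'
      refine ⟨a, c + A i, hb, ?_, add_mem hc (AddSubmonoid.subset_closure (Set.mem_range_self i))⟩
      rw [hphiu, heq, add_assoc]
    · exact ⟨phi A u, 0, ⟨u, v, rfl, hphi.symm, hR⟩, by simp, zero_mem _⟩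

lemma phi_eq_zero' {n r : ℕ} {A : Fin r → (Fin n → ℤ)} {S : AddSubmonoid (Fin n → ℤ)}
    (hAS : ∀ i, A i ∈ S) (hred : ∀ x ∈ S, -x ∈ S → x = 0)
    (hA0 : ∀ i, A i ≠ 0) {w : Fin r → ℕ} (hw : phi A w = 0) : w = 0 := by
  funext i
  show w i = 0
  by_contra h
  have hsplit : w i • A i + ∑ j ∈ Finset.univ.erase i, w j • A j = 0 := by
    have h2 := hw
    simp only [phi] at h2
    rw [← Finset.add_sum_erase _ _ (Finset.mem_univ i)] at h2
    exact h2
  have hx : w i • A i ∈ S := AddSubmonoid.nsmul_mem _ (hAS i) _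
  have hy : -(w i • A i) ∈ S := by
    have he : -(w i • A i) = ∑ j ∈ Finset.univ.erase i, w j • A j := by
      rw [neg_eq_iff_add_eq_zero]
      exact hsplit
    rw [he]
    exact AddSubmonoid.sum_mem _ fun j _ => AddSubmonoid.nsmul_mem _ (hAS j) _
  have h0 : w i • A i = 0 := hred _ hx hy
  apply hA0 i
  funext k
  have hk := congrFun h0 k
  simp only [Pi.smul_apply, Pi.zero_apply, smul_eq_mul, nsmul_eq_mul] at hk
  rcases mul_eq_zero.mp hk with h' | h'
  · exact absurd (by exact_mod_cast h') h
  · simp [h']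

lemma three_in_pair {α : Type*} {u v x y z : α} (hx : x = u ∨ x = v) (hy : y = u ∨ y = v)
    (hz : z = u ∨ z = v) (hxy : x ≠ y) : z = x ∨ z = y := by
  rcases hx with h | h <;> rcases hy with h' | h' <;> rcases hz with h'' | h'' <;> simp_all

/-- If `S` is the gluing of `S₁` and `S₂` with `G(S₁) ∩ G(S₂) = dℤ`, then `d` has a unique
presentation in `S` iff `d - a ∉ S` for every `a ∈ Betti(S₁) ∪ Betti(S₂)`. -/
theorem stmt8 {n r₁ r₂ : ℕ} (A₁ : Fin r₁ → (Fin n → ℤ)) (A₂ : Fin r₂ → (Fin n → ℤ))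
    (hdisj : Disjoint (Set.range A₁) (Set.range A₂))
    (hmin : ∀ i : Fin (r₁ + r₂), ¬ ∃ u : Fin (r₁ + r₂) → ℕ,
      u i = 0 ∧ phi (Fin.append A₁ A₂) u = Fin.append A₁ A₂ i)
    (hred : ∀ x ∈ AddSubmonoid.closure (Set.range (Fin.append A₁ A₂)),
      -x ∈ AddSubmonoid.closure (Set.range (Fin.append A₁ A₂)) → x = 0)
    (d : Fin n → ℤ) (hd0 : d ≠ 0)
    (hd1 : d ∈ AddSubmonoid.closure (Set.range A₁))
    (hd2 : d ∈ AddSubmonoid.closure (Set.range A₂))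
    (hglue : AddSubgroup.closure (Set.range A₁) ⊓ AddSubgroup.closure (Set.range A₂)
      = AddSubgroup.zmultiples d) :
    HasUniquePres (Fin.append A₁ A₂) d ↔
      ∀ a : Fin n → ℤ, (IsBetti A₁ a ∨ IsBetti A₂ a) →
        d - a ∉ AddSubmonoid.closure (Set.range (Fin.append A₁ A₂)) := by
  set A : Fin (r₁ + r₂) → (Fin n → ℤ) := Fin.append A₁ A₂ with hA
  -- basic facts
  have hA0 : ∀ i, A i ≠ 0 := by
    intro i h
    exact hmin i ⟨0, rfl, by rw [h, phi_zero']⟩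
  have hA1mem : ∀ i, A₁ i ∈ AddSubmonoid.closure (Set.range A) := fun i =>
    AddSubmonoid.subset_closure ⟨Fin.castAdd r₂ i, Fin.append_left A₁ A₂ i⟩
  have hA2mem : ∀ i, A₂ i ∈ AddSubmonoid.closure (Set.range A) := fun i =>
    AddSubmonoid.subset_closure ⟨Fin.natAdd r₁ i, Fin.append_right A₁ A₂ i⟩
  have hA10 : ∀ i, A₁ i ≠ 0 := fun i h => hA0 (Fin.castAdd r₂ i) (by rw [hA, Fin.append_left]; exact h)
  have hA20 : ∀ i, A₂ i ≠ 0 := fun i h => hA0 (Fin.natAdd r₁ i) (by rw [hA, Fin.append_right]; exact h)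
  have hz1 : ∀ {w : Fin r₁ → ℕ}, phi A₁ w = 0 → w = 0 := fun hw =>
    phi_eq_zero' hA1mem hred hA10 hw
  have hz2 : ∀ {w : Fin r₂ → ℕ}, phi A₂ w = 0 → w = 0 := fun hw =>
    phi_eq_zero' hA2mem hred hA20 hw
  have hle1 : AddSubmonoid.closure (Set.range A₁) ≤ AddSubmonoid.closure (Set.range A) :=
    AddSubmonoid.closure_le.mpr fun x hx => by
      obtain ⟨i, rfl⟩ := hx
      exact hA1mem i
  have hle2 : AddSubmonoid.closure (Set.range A₂) ≤ AddSubmonoid.closure (Set.range A) :=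
    AddSubmonoid.closure_le.mpr fun x hx => by
      obtain ⟨i, rfl⟩ := hx
      exact hA2mem i
  have hdS : d ∈ AddSubmonoid.closure (Set.range A) := hle1 hd1
  have hmg : ∀ (s : Set (Fin n → ℤ)) (x : Fin n → ℤ), x ∈ AddSubmonoid.closure s →
      x ∈ AddSubgroup.closure s := fun s x hx =>
    (AddSubmonoid.closure_le.mpr (AddSubgroup.subset_closure (G := Fin n → ℤ) (k := s)) :
      AddSubmonoid.closure s ≤ (AddSubgroup.closure s).toAddSubmonoid) hx
  constructor
  · -- unique presentation → no Betti element below d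
    rintro ⟨u, v, huv, hfib, -⟩ a ha hda
    obtain ⟨t, ht⟩ := (mem_closure_iff_phi A _).mp hda
    have hmem : ∀ w : Fin (r₁ + r₂) → ℕ, phi A w = d → w = u ∨ w = v := by
      intro w hw
      have hw' : w ∈ {w : Fin (r₁ + r₂) → ℕ | phi A w = d} := hw
      rw [hfib] at hw'
      simpa using hw'
    rcases ha with ⟨u₁, v₁, hu₁, hv₁, hR⟩ | ⟨u₂, v₂, hu₂, hv₂, hR⟩
    · have hu₁v₁ : u₁ ≠ v₁ := by rintro rfl; exact hR Relation.ReflTransGen.refl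
      have hx : phi A (Fin.append u₁ 0 + t) = d := by
        rw [phi_add', phi_append', phi_zero', hu₁, ht]; abel
      have hy : phi A (Fin.append v₁ 0 + t) = d := by
        rw [phi_add', phi_append', phi_zero', hv₁, ht]; abel
      obtain ⟨p, hp⟩ := (mem_closure_iff_phi A₂ d).mp hd2
      have hzp : phi A (Fin.append (0 : Fin r₁ → ℕ) p) = d := by
        rw [phi_append', phi_zero', hp, zero_add]
      have hxy : Fin.append u₁ 0 + t ≠ Fin.append v₁ 0 + t := by
        intro h
        apply hu₁v₁
        funext i
        have h4 := congrFun h (Fin.castAdd r₂ i)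
        simp [Fin.append_left] at h4
        omega
      have hkey : ∀ s₁ : Fin r₁ → ℕ,
          Fin.append (0 : Fin r₁ → ℕ) p = Fin.append s₁ 0 + t → s₁ = 0 := by
        intro s₁ hzz
        funext i
        show s₁ i = 0
        have h5 := congrFun hzz (Fin.castAdd r₂ i)
        simp [Fin.append_left] at h5
        omega
      rcases three_in_pair (hmem _ hx) (hmem _ hy) (hmem _ hzp) hxy with h | h
      · have h0 : u₁ = 0 := hkey u₁ h
        have ha0 : a = 0 := by rw [← hu₁, h0, phi_zero']
        have hv0 : v₁ = 0 := hz1 (by rw [hv₁, ha0])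
        exact hu₁v₁ (h0.trans hv0.symm)
      · have h0 : v₁ = 0 := hkey v₁ h
        have ha0 : a = 0 := by rw [← hv₁, h0, phi_zero']
        have hu0 : u₁ = 0 := hz1 (by rw [hu₁, ha0])
        exact hu₁v₁ (hu0.trans h0.symm)
    · have hu₂v₂ : u₂ ≠ v₂ := by rintro rfl; exact hR Relation.ReflTransGen.refl
      have hx : phi A (Fin.append (0 : Fin r₁ → ℕ) u₂ + t) = d := by
        rw [phi_add', phi_append', phi_zero', hu₂, ht]; abel
      have hy : phi A (Fin.append (0 : Fin r₁ → ℕ) v₂ + t) = d := by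
        rw [phi_add', phi_append', phi_zero', hv₂, ht]; abel
      obtain ⟨q, hq⟩ := (mem_closure_iff_phi A₁ d).mp hd1
      have hzq : phi A (Fin.append q (0 : Fin r₂ → ℕ)) = d := by
        rw [phi_append', phi_zero', hq, add_zero]
      have hxy : Fin.append (0 : Fin r₁ → ℕ) u₂ + t ≠ Fin.append (0 : Fin r₁ → ℕ) v₂ + t := by
        intro h
        apply hu₂v₂
        funext i
        have h4 := congrFun h (Fin.natAdd r₁ i)
        simp [Fin.append_right] at h4
        omega
      have hkey : ∀ s₂ : Fin r₂ → ℕ,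
          Fin.append q (0 : Fin r₂ → ℕ) = Fin.append (0 : Fin r₁ → ℕ) s₂ + t → s₂ = 0 := by
        intro s₂ hzz
        funext i
        show s₂ i = 0
        have h5 := congrFun hzz (Fin.natAdd r₁ i)
        simp [Fin.append_right] at h5
        omega
      rcases three_in_pair (hmem _ hx) (hmem _ hy) (hmem _ hzq) hxy with h | h
      · have h0 : u₂ = 0 := hkey u₂ h
        have ha0 : a = 0 := by rw [← hu₂, h0, phi_zero']
        have hv0 : v₂ = 0 := hz2 (by rw [hv₂, ha0])
        exact hu₂v₂ (h0.trans hv0.symm)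
      · have h0 : v₂ = 0 := hkey v₂ h
        have ha0 : a = 0 := by rw [← hv₂, h0, phi_zero']
        have hu0 : u₂ = 0 := hz2 (by rw [hu₂, ha0])
        exact hu₂v₂ (hu0.trans h0.symm)
  · -- no Betti element below d → unique presentation
    intro hB
    have huniq1 : ∀ w w' : Fin r₁ → ℕ, phi A₁ w = d → phi A₁ w' = d → w = w' := by
      intro w w' hw hw'
      by_contra hne
      obtain ⟨a, c, hb, heq, hc⟩ := descent' A₁ (∑ i, w i) w w' le_rfl hne
        (hw.trans hw'.symm)
      refine hB a (Or.inl hb) ?_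
      have hdc : d - a = c := by rw [← hw, heq]; abel
      rw [hdc]
      exact hle1 hc
    have huniq2 : ∀ w w' : Fin r₂ → ℕ, phi A₂ w = d → phi A₂ w' = d → w = w' := by
      intro w w' hw hw'
      by_contra hne
      obtain ⟨a, c, hb, heq, hc⟩ := descent' A₂ (∑ i, w i) w w' le_rfl hne
        (hw.trans hw'.symm)
      refine hB a (Or.inr hb) ?_
      have hdc : d - a = c := by rw [← hw, heq]; abel
      rw [hdc]
      exact hle2 hc
    obtain ⟨u₁, hu₁⟩ := (mem_closure_iff_phi A₁ d).mp hd1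
    obtain ⟨u₂, hu₂⟩ := (mem_closure_iff_phi A₂ d).mp hd2
    refine ⟨Fin.append u₁ (0 : Fin r₂ → ℕ), Fin.append (0 : Fin r₁ → ℕ) u₂, ?_, ?_, ?_⟩
    · intro h
      have h1 : u₁ = 0 := by
        funext i
        have h2 := congrFun h (Fin.castAdd r₂ i)
        simpa [Fin.append_left] using h2
      rw [h1, phi_zero'] at hu₁
      exact hd0 hu₁.symm
    · ext w
      simp only [Set.mem_setOf_eq, Set.mem_insert_iff, Set.mem_singleton_iff]
      constructor
      · intro hw
        set w₁ : Fin r₁ → ℕ := fun i => w (Fin.castAdd r₂ i) with hw₁def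
        set w₂ : Fin r₂ → ℕ := fun i => w (Fin.natAdd r₁ i) with hw₂def
        have hsum : phi A₁ w₁ + phi A₂ w₂ = d := by
          rw [← phi_append', ← append_decomp w]
          exact hw
        have hs₁G : phi A₁ w₁ ∈ AddSubgroup.zmultiples d := by
          rw [← hglue]
          refine AddSubgroup.mem_inf.mpr ⟨hmg _ _ ?_, ?_⟩
          · exact (mem_closure_iff_phi A₁ _).mpr ⟨w₁, rfl⟩
          · have heq : phi A₁ w₁ = d - phi A₂ w₂ := eq_sub_of_add_eq hsum
            rw [heq]
            exact sub_mem (hmg _ _ hd2) (hmg _ _ ((mem_closure_iff_phi A₂ _).mpr ⟨w₂, rfl⟩))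
        obtain ⟨k, hk⟩ := AddSubgroup.mem_zmultiples_iff.mp hs₁G
        rcases le_or_gt k 0 with hk0 | hk0
        · -- phi A₁ w₁ = 0, so w is the pure A₂ factorization
          have hmem1 : phi A₁ w₁ ∈ AddSubmonoid.closure (Set.range A) :=
            hle1 ((mem_closure_iff_phi A₁ _).mpr ⟨w₁, rfl⟩)
          have hneg : -(phi A₁ w₁) ∈ AddSubmonoid.closure (Set.range A) := by
            have he : (-k).toNat • d = -(phi A₁ w₁) := by
              rw [← natCast_zsmul, Int.toNat_of_nonneg (by omega : (0:ℤ) ≤ -k), ← hk,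
                ← neg_smul]
            rw [← he]
            exact AddSubmonoid.nsmul_mem _ hdS _
          have h0 : phi A₁ w₁ = 0 := hred _ hmem1 hneg
          have hw₁0 : w₁ = 0 := hz1 h0
          have hw₂d : phi A₂ w₂ = d := by rw [h0, zero_add] at hsum; exact hsum
          have hw₂u : w₂ = u₂ := huniq2 w₂ u₂ hw₂d hu₂
          right
          calc w = Fin.append w₁ w₂ := append_decomp w
            _ = Fin.append (0 : Fin r₁ → ℕ) u₂ := by rw [hw₁0, hw₂u]
        · -- k ≥ 1 : phi A₂ w₂ = 0, so w is the pure A₁ factorization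
          have hs2 : phi A₂ w₂ = (1 - k) • d := by
            have heq : phi A₂ w₂ = d - phi A₁ w₁ := eq_sub_of_add_eq' hsum
            rw [heq, ← hk, sub_smul, one_smul]
          have hmem2 : phi A₂ w₂ ∈ AddSubmonoid.closure (Set.range A) :=
            hle2 ((mem_closure_iff_phi A₂ _).mpr ⟨w₂, rfl⟩)
          have hneg : -(phi A₂ w₂) ∈ AddSubmonoid.closure (Set.range A) := by
            have he : (k - 1).toNat • d = -(phi A₂ w₂) := by
              rw [← natCast_zsmul, Int.toNat_of_nonneg (by omega : (0:ℤ) ≤ k - 1), hs2,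
                ← neg_smul, neg_sub]
            rw [← he]
            exact AddSubmonoid.nsmul_mem _ hdS _
          have h0 : phi A₂ w₂ = 0 := hred _ hmem2 hneg
          have hw₂0 : w₂ = 0 := hz2 h0
          have hw₁d : phi A₁ w₁ = d := by rw [h0, add_zero] at hsum; exact hsum
          have hw₁u : w₁ = u₁ := huniq1 w₁ u₁ hw₁d hu₁
          left
          calc w = Fin.append w₁ w₂ := append_decomp w
            _ = Fin.append u₁ (0 : Fin r₂ → ℕ) := by rw [hw₂0, hw₁u]
      · rintro (rfl | rfl)
        · rw [phi_append', phi_zero', hu₁, add_zero]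
        · rw [phi_append', phi_zero', hu₂, zero_add]
    · rw [Fin.sum_univ_add]
      simp [Fin.append_left, Fin.append_right]
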